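/- Let n be a positive integer and let M be a real n × n matrix. Suppose M = P₁ W₁ᵀ Z₁ W₁ and M = P₂ W₂ᵀ Z₂ W₂, where for each k = 1, 2: Z_k is a real symmetric positive-definite m_k × m_k matrix, W_k is a real m_k × n matrix of rank n, and P_k is an n × n permutation matrix. Then P₁ = P₂. -/

import Mathlib

open Matrix

/-- The permutation matrix of a permutation `σ`. -/
def permMatrix {n : ℕ} (σ : Equiv.Perm (Fin n)) : Matrix (Fin n) (Fin n) ℝ :=
  Matrix.of fun i j => if σ i = j then 1 else 0

lemma permMatrix_transpose_mul {n : ℕ} (σ : Equiv.Perm (Fin n)) :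
    (permMatrix σ)ᵀ * permMatrix σ = 1 := by
  ext i j
  simp only [Matrix.mul_apply, Matrix.transpose_apply, permMatrix, Matrix.of_apply,
    Matrix.one_apply]
  rw [Finset.sum_eq_single (σ.symm i)]
  · simp [Equiv.apply_symm_apply, eq_comm]
  · intro k _ hk
    have : ¬ σ k = i := fun h => hk (by simp [← h])
    simp [this]
  · simp

lemma mulVec_eq_zero_of_rank {m n : ℕ} (W : Matrix (Fin m) (Fin n) ℝ) (hW : W.rank = n)
    {x : Fin n → ℝ} (hx : W *ᵥ x = 0) : x = 0 := by
  have h := W.mulVecLin.finrank_range_add_finrank_ker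
  rw [show Module.finrank ℝ (Fin n → ℝ) = n by simp] at h
  rw [show Module.finrank ℝ (LinearMap.range W.mulVecLin) = n from hW] at h
  have hker : LinearMap.ker W.mulVecLin = ⊥ := by
    rw [← Submodule.finrank_eq_zero (R := ℝ)]
    omega
  have : x ∈ LinearMap.ker W.mulVecLin := by simpa [Matrix.mulVecLin_apply] using hx
  rw [hker] at this
  simpa using this

lemma posDef_conj {m n : ℕ} (Z : Matrix (Fin m) (Fin m) ℝ) (hZ : Z.PosDef)
    (W : Matrix (Fin m) (Fin n) ℝ) (hW : W.rank = n) : (Wᵀ * Z * W).PosDef := by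
  rw [Matrix.posDef_iff_dotProduct_mulVec]
  constructor
  · have := Matrix.isHermitian_conjTranspose_mul_mul W hZ.isHermitian
    simpa [Matrix.conjTranspose_eq_transpose_of_trivial] using this
  · intro x hx
    have hWx : W *ᵥ x ≠ 0 := fun h => hx (mulVec_eq_zero_of_rank W hW h)
    have key : (star x) ⬝ᵥ ((Wᵀ * Z * W) *ᵥ x)
        = (star (W *ᵥ x)) ⬝ᵥ (Z *ᵥ (W *ᵥ x)) := by
      simp only [star_trivial]
      rw [Matrix.mul_assoc, ← Matrix.mulVec_mulVec, Matrix.dotProduct_mulVec,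
        Matrix.vecMul_transpose, ← Matrix.mulVec_mulVec]
    rw [key]
    exact hZ.dotProduct_mulVec_pos hWx

open scoped MatrixOrder in
lemma posSemidef_eq_of_sq_eq_sq {n : ℕ} {A B : Matrix (Fin n) (Fin n) ℝ}
    (hA : A.PosSemidef) (hB : B.PosSemidef) (h : A ^ 2 = B ^ 2) : A = B :=
  (CFC.sq_eq_sq_iff A B hA.nonneg hB.nonneg).mp h

theorem perm_factor_unique {n m₁ m₂ : ℕ} (hn : 0 < n)
    (M : Matrix (Fin n) (Fin n) ℝ)
    (Z₁ : Matrix (Fin m₁) (Fin m₁) ℝ) (hZ₁ : Z₁.PosDef)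
    (W₁ : Matrix (Fin m₁) (Fin n) ℝ) (hW₁ : W₁.rank = n)
    (Z₂ : Matrix (Fin m₂) (Fin m₂) ℝ) (hZ₂ : Z₂.PosDef)
    (W₂ : Matrix (Fin m₂) (Fin n) ℝ) (hW₂ : W₂.rank = n)
    (σ₁ σ₂ : Equiv.Perm (Fin n))
    (hfac₁ : M = permMatrix σ₁ * (W₁ᵀ * Z₁ * W₁))
    (hfac₂ : M = permMatrix σ₂ * (W₂ᵀ * Z₂ * W₂)) :
    permMatrix σ₁ = permMatrix σ₂ := by
  have hA₁ := posDef_conj Z₁ hZ₁ W₁ hW₁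
  have hA₂ := posDef_conj Z₂ hZ₂ W₂ hW₂
  have hs₁ : (W₁ᵀ * Z₁ * W₁)ᵀ = W₁ᵀ * Z₁ * W₁ := by
    have := hA₁.isHermitian.eq
    simpa [Matrix.conjTranspose_eq_transpose_of_trivial] using this
  have hs₂ : (W₂ᵀ * Z₂ * W₂)ᵀ = W₂ᵀ * Z₂ * W₂ := by
    have := hA₂.isHermitian.eq
    simpa [Matrix.conjTranspose_eq_transpose_of_trivial] using this
  have h1 : Mᵀ * M = (W₁ᵀ * Z₁ * W₁) ^ 2 := by
    rw [hfac₁, Matrix.transpose_mul, hs₁, Matrix.mul_assoc,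
      ← Matrix.mul_assoc (permMatrix σ₁)ᵀ, permMatrix_transpose_mul, Matrix.one_mul, pow_two]
  have h2 : Mᵀ * M = (W₂ᵀ * Z₂ * W₂) ^ 2 := by
    rw [hfac₂, Matrix.transpose_mul, hs₂, Matrix.mul_assoc,
      ← Matrix.mul_assoc (permMatrix σ₂)ᵀ, permMatrix_transpose_mul, Matrix.one_mul, pow_two]
  have hAeq : W₁ᵀ * Z₁ * W₁ = W₂ᵀ * Z₂ * W₂ :=
    posSemidef_eq_of_sq_eq_sq hA₁.posSemidef hA₂.posSemidef (h1 ▸ h2)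
  have hc : permMatrix σ₁ * (W₁ᵀ * Z₁ * W₁) = permMatrix σ₂ * (W₁ᵀ * Z₁ * W₁) := by
    rw [← hfac₁, hfac₂, hAeq]
  have hinv : (W₁ᵀ * Z₁ * W₁) * (W₁ᵀ * Z₁ * W₁)⁻¹ = 1 :=
    Matrix.mul_nonsing_inv _ (isUnit_iff_ne_zero.mpr hA₁.det_pos.ne')
  have h3 := congrArg (fun X => X * (W₁ᵀ * Z₁ * W₁)⁻¹) hc
  simp only [Matrix.mul_assoc] at h3 hinv
  rw [hinv, Matrix.mul_one, Matrix.mul_one] at h3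
  exact h3
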